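/- Injectivity on completely reduced monomials: with M closed under comparability and Ψ: K[T_{ij} : u_{ij} ∈ M] → K[x,t] defined by Ψ(T_{ij}) = u_{ij} t_i (t_0 = 1), if m and m' are completely reduced monomials with Ψ(m) = Ψ(m'), then m = m'. Consequently the images under Ψ of the completely reduced monomials are linearly independent over K. -/

import Mathlib

/-! Multi-Rees setup.  Monomials in `K[X_1,…,X_n]` are multisets of variable
indices (index `a` ↔ `X_{a+1}`; smaller index = larger variable).  Levels are
`i : Fin (s+1)`, level `0` corresponding to the maximal ideal `I_0`; `U i j` is
the monomial `u_{ij}` and a monomial of `K[T_{ij}]` is a multiset of `T`-variables,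
i.e. a multiset of pairs `⟨i, j⟩`. -/

def stdList (m : Multiset ℕ) : List ℕ := m.sort (· ≤ ·)

def evens (l : List ℕ) : List ℕ := (((List.range l.length).zip l).filter fun p => p.1 % 2 == 0).map Prod.snd

def odds (l : List ℕ) : List ℕ := (((List.range l.length).zip l).filter fun p => p.1 % 2 == 1).map Prod.snd

/-- `sort(u,v)` of two equal-degree monomials. -/
def sortPair (u v : Multiset ℕ) : Multiset ℕ × Multiset ℕ :=
  (((evens (stdList (u + v)) : List ℕ) : Multiset ℕ),
   ((odds (stdList (u + v)) : List ℕ) : Multiset ℕ))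

/-- `ord(u,v)` for `deg u ≤ deg v`. -/
def ordPair (u v : Multiset ℕ) : Multiset ℕ × Multiset ℕ :=
  ((((stdList (u + v)).drop (Multiset.card v) : List ℕ) : Multiset ℕ),
   (((stdList (u + v)).take (Multiset.card v) : List ℕ) : Multiset ℕ))

/-- Graded reverse-lex `u >_rev v` for equal-degree monomials. -/
def revGtM (u v : Multiset ℕ) : Prop :=
  ∃ k, (stdList u).getD k 0 < (stdList v).getD k 0 ∧
    ∀ k', k < k' → (stdList u).getD k' 0 = (stdList v).getD k' 0

/-- The type of `T`-variables `T_{ij}`. -/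
def TVar (s : ℕ) (ni : Fin (s + 1) → ℕ) : Type := (i : Fin (s + 1)) × Fin (ni i)

instance (s : ℕ) (ni : Fin (s + 1) → ℕ) : DecidableEq (TVar s ni) := by
  unfold TVar; infer_instance

/-- Number of pairs `(y ∈ a, y' ∈ b)` (with multiplicity) such that the variable
occurrence `y'` is a strictly smaller variable than `y`, i.e. has strictly larger
index. -/
def crossCount (a b : Multiset ℕ) : ℕ :=
  (a.map fun y => Multiset.card (b.filter fun y' => y < y')).sum

/-- The comparability number `c_m`: the number of pairs of variable occurrences
(`Y` at level `i`, `Y'` at level `i' > i`) with `Y' < Y`. -/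
def cNum {s : ℕ} {ni : Fin (s + 1) → ℕ} (U : (i : Fin (s + 1)) → Fin (ni i) → Multiset ℕ)
    (m : Multiset (TVar s ni)) : ℕ :=
  (m.map fun T => (m.map fun T' =>
    if T.1 < T'.1 then crossCount (U T.1 T.2) (U T'.1 T'.2) else 0).sum).sum

/-- Column-major lex order on positions `(row, col)` of a matrix. -/
def posLtN (p q : ℕ × ℕ) : Prop := p.2 < q.2 ∨ (p.2 = q.2 ∧ p.1 < q.1)

instance : DecidableRel posLtN := fun _ _ => by unfold posLtN; infer_instance

def entryL (rows : List (List ℕ)) (j k : ℕ) : ℕ := (rows.getD j []).getD k 0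

/-- Number of inversions of the matrix whose rows (of common length `dcol`) are
the members of `rows`. -/
def invRowsL (dcol : ℕ) (rows : List (List ℕ)) : ℕ :=
  (Finset.filter (fun p : (ℕ × ℕ) × (ℕ × ℕ) =>
      posLtN p.1 p.2 ∧ entryL rows p.1.1 p.1.2 < entryL rows p.2.1 p.2.2)
    ((Finset.range rows.length ×ˢ Finset.range dcol) ×ˢ
      (Finset.range rows.length ×ˢ Finset.range dcol))).card

/-- `e_{m,i}` computed over inversion-minimal matrices: the minimum, over all
orderings of the given multiset of rows, of the inversion number. -/
noncomputable def eLevel (dcol : ℕ) (lvl : Multiset (List ℕ)) : ℕ :=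
  sInf { e | ∃ rows : List (List ℕ), (rows : Multiset (List ℕ)) = lvl ∧ invRowsL dcol rows = e }

/-- The total number of inversions `e_m = Σ_i e_{m,i}`. -/
noncomputable def eNum {s : ℕ} {ni : Fin (s + 1) → ℕ} (U : (i : Fin (s + 1)) → Fin (ni i) → Multiset ℕ)
    (d : Fin (s + 1) → ℕ) (m : Multiset (TVar s ni)) : ℕ :=
  ∑ i : Fin (s + 1), eLevel (d i)
    ((m.filter fun T => T.1 = i).map fun T => stdList (U T.1 T.2))

/-- Comparability `u_{ij} ≺ u_{i'j'}`: either `i < i'` and `ord` fixes the pair, or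
`i = i'` and `sort` fixes the pair. -/
def prec {s : ℕ} {ni : Fin (s + 1) → ℕ} (U : (i : Fin (s + 1)) → Fin (ni i) → Multiset ℕ)
    (a b : TVar s ni) : Prop :=
  (a.1 < b.1 ∧ ordPair (U a.1 a.2) (U b.1 b.2) = (U a.1 a.2, U b.1 b.2)) ∨
  (a.1 = b.1 ∧ sortPair (U a.1 a.2) (U b.1 b.2) = (U a.1 a.2, U b.1 b.2))


/-- The image `Ψ(T_{ij}) = u_{ij} t_i` (with `t_0 = 1`) as a monomial of
`K[X_1,…,X_n, t_1,…,t_s]`, realized in `MvPolynomial (ℕ ⊕ Fin (s+1)) K`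
(`Sum.inl a` is the variable `X_{a+1}`, `Sum.inr i` is `t_i`). -/
noncomputable def PsiT {s : ℕ} {ni : Fin (s + 1) → ℕ} (K : Type*) [Field K]
    (U : (i : Fin (s + 1)) → Fin (ni i) → Multiset ℕ) (T : TVar s ni) :
    MvPolynomial (ℕ ⊕ Fin (s + 1)) K :=
  ((U T.1 T.2).map fun x => MvPolynomial.X (Sum.inl x)).prod *
    (if T.1 = 0 then 1 else MvPolynomial.X (Sum.inr T.1))

/-- `Ψ` on monomials of `K[T_{ij}]`. -/
noncomputable def Psi {s : ℕ} {ni : Fin (s + 1) → ℕ} (K : Type*) [Field K]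
    (U : (i : Fin (s + 1)) → Fin (ni i) → Multiset ℕ) (m : Multiset (TVar s ni)) :
    MvPolynomial (ℕ ⊕ Fin (s + 1)) K :=
  (m.map (PsiT K U)).prod

/-- A monomial `m` of `K[T_{ij}]` is completely reduced iff `c_m = e_m = 0`;
equivalently (given closure under comparability), any two of its `T`-variable
factors correspond to comparable monomials.  Here we use the latter description. -/
def CompletelyReduced {s : ℕ} {ni : Fin (s + 1) → ℕ}
    (U : (i : Fin (s + 1)) → Fin (ni i) → Multiset ℕ) (m : Multiset (TVar s ni)) : Prop :=
  ∀ a ∈ m, ∀ b ∈ m, a ≠ b → prec U a b ∨ prec U b a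


namespace MR
open Multiset List

/-! ### evens/odds -/

mutual
def eva : List ℕ → List ℕ
  | [] => []
  | a :: l => a :: oda l
def oda : List ℕ → List ℕ
  | [] => []
  | _ :: l => eva l
end

lemma enum_parity (l : List ℕ) : ∀ n : ℕ,
    ((((List.range' n l.length).zip l).filter fun p => p.1 % 2 == 0).map Prod.snd
      = if n % 2 = 0 then eva l else oda l) ∧
    ((((List.range' n l.length).zip l).filter fun p => p.1 % 2 == 1).map Prod.snd
      = if n % 2 = 0 then oda l else eva l) := by
  induction l with
  | nil => intro n; simp [eva, oda]
  | cons a l ih =>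
    intro n
    have h1 := (ih (n + 1)).1
    have h2 := (ih (n + 1)).2
    rcases Nat.mod_two_eq_zero_or_one n with h | h <;>
      have hn1 : (n + 1) % 2 = 1 - n % 2 := by omega
    all_goals
      rw [hn1, h] at h1 h2
      norm_num at h1 h2
      simp only [List.length_cons, List.range'_succ, List.zip_cons_cons, List.filter_cons, List.map_cons, h1, h2, h, eva, oda]
      norm_num
      all_goals exact ⟨h1, h2⟩

lemma evens_eq (l : List ℕ) : evens l = eva l := by
  have h := (enum_parity l 0).1
  rw [evens, List.range_eq_range', h]; simp

lemma odds_eq (l : List ℕ) : odds l = oda l := by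
  have h := (enum_parity l 0).2
  rw [odds, List.range_eq_range', h]; simp

lemma mem_eva_oda : ∀ (l : List ℕ), (∀ x ∈ eva l, x ∈ l) ∧ (∀ x ∈ oda l, x ∈ l) := by
  intro l
  induction l with
  | nil => simp [eva, oda]
  | cons a l ih =>
    constructor
    · intro x hx
      rw [eva] at hx
      rcases List.mem_cons.mp hx with h | h
      · simp [h]
      · exact List.mem_cons_of_mem a (ih.2 x h)
    · intro x hx
      rw [oda] at hx
      exact List.mem_cons_of_mem a (ih.1 x hx)

lemma sorted_eva_oda : ∀ (l : List ℕ), l.Pairwise (· ≤ ·) →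
    (eva l).Pairwise (· ≤ ·) ∧ (oda l).Pairwise (· ≤ ·) := by
  intro l
  induction l with
  | nil => intro _; simp [eva, oda]
  | cons a l ih =>
    intro hs
    rw [List.pairwise_cons] at hs
    obtain ⟨ha, hl⟩ := hs
    refine ⟨?_, (ih hl).1⟩
    rw [eva, List.pairwise_cons]
    exact ⟨fun x hx => ha x ((mem_eva_oda l).2 x hx), (ih hl).2⟩

lemma getD_eva_oda : ∀ (l : List ℕ) (q : ℕ),
    (eva l).getD q 0 = l.getD (2 * q) 0 ∧ (oda l).getD q 0 = l.getD (2 * q + 1) 0 := by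
  intro l
  induction l with
  | nil => intro q; simp [eva, oda]
  | cons a l ih =>
    intro q
    cases q with
    | zero => simpa [eva, oda] using (ih 0).1
    | succ q =>
      constructor
      · rw [eva, List.getD_cons_succ, (ih q).2]
        show l.getD (2 * q + 1) 0 = (a :: l).getD (2 * (q + 1)) 0
        have h2 : 2 * (q + 1) = (2 * q + 1) + 1 := by ring
        rw [h2, List.getD_cons_succ]
      · rw [oda, (ih (q + 1)).1]
        show l.getD (2 * (q + 1)) 0 = (a :: l).getD (2 * (q + 1) + 1) 0
        rw [List.getD_cons_succ]

/-! ### stdList basics -/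

lemma stdList_sorted (m : Multiset ℕ) : (stdList m).Pairwise (· ≤ ·) :=
  Multiset.pairwise_sort _ _

lemma stdList_coe (m : Multiset ℕ) : ((stdList m : List ℕ) : Multiset ℕ) = m :=
  Multiset.sort_eq _ _

lemma stdList_length (m : Multiset ℕ) : (stdList m).length = Multiset.card m :=
  Multiset.length_sort _

lemma sorted_eq_stdList {l : List ℕ} (hs : l.Pairwise (· ≤ ·)) {m : Multiset ℕ}
    (hm : (l : Multiset ℕ) = m) : l = stdList m := by
  refine List.Perm.eq_of_pairwise' hs (Multiset.pairwise_sort _ _) ?_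
  rw [← Multiset.coe_eq_coe, stdList_coe, hm]

lemma sorted_getD_mono {l : List ℕ} (h : l.Pairwise (· ≤ ·)) {p q : ℕ}
    (hpq : p ≤ q) (hq : q < l.length) : l.getD p 0 ≤ l.getD q 0 := by
  rw [List.getD_eq_getElem l 0 (lt_of_le_of_lt hpq hq), List.getD_eq_getElem l 0 hq]
  exact List.Pairwise.rel_get_of_le h (a := ⟨p, lt_of_le_of_lt hpq hq⟩) (b := ⟨q, hq⟩)
    (by simpa using hpq)

/-! ### entries -/

def entryq (q : ℕ) (u : Multiset ℕ) : ℕ := (stdList u).getD q 0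

lemma entryq_mono {u : Multiset ℕ} {p q : ℕ} (hpq : p ≤ q) (hq : q < Multiset.card u) :
    entryq p u ≤ entryq q u :=
  sorted_getD_mono (stdList_sorted u) hpq (by rwa [stdList_length])

lemma entryq_zero {u : Multiset ℕ} {q : ℕ} (h : Multiset.card u ≤ q) : entryq q u = 0 :=
  List.getD_eq_default _ _ (by rwa [stdList_length])

lemma entryq_ext {u v : Multiset ℕ} (hc : Multiset.card u = Multiset.card v)
    (h : ∀ q, entryq q u = entryq q v) : u = v := by
  have hl : stdList u = stdList v := by
    apply List.ext_getElem (by rw [stdList_length, stdList_length, hc])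
    intro i h1 h2
    have h3 := h i
    rwa [entryq, entryq, List.getD_eq_getElem _ _ h1, List.getD_eq_getElem _ _ h2] at h3
  rw [← stdList_coe u, ← stdList_coe v, hl]

lemma sort_pair_props {u v : Multiset ℕ} {dd : ℕ} (hu : Multiset.card u = dd)
    (hv : Multiset.card v = dd) (h : sortPair u v = (u, v)) :
    (∀ q, entryq q u ≤ entryq q v) ∧
    (∀ p q, p < q → q < dd → entryq p v ≤ entryq q u) := by
  set L := stdList (u + v) with hL
  have hsor : L.Pairwise (· ≤ ·) := stdList_sorted _
  have hlen : L.length = dd + dd := by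
    rw [hL, stdList_length, Multiset.card_add, hu, hv]
  have hev : ((eva L : List ℕ) : Multiset ℕ) = u := by
    have h1 := congrArg Prod.fst h
    simpa [sortPair, evens_eq, hL] using h1
  have hod : ((oda L : List ℕ) : Multiset ℕ) = v := by
    have h1 := congrArg Prod.snd h
    simpa [sortPair, odds_eq, hL] using h1
  have hstdu : stdList u = eva L := (sorted_eq_stdList (sorted_eva_oda L hsor).1 hev).symm
  have hstdv : stdList v = oda L := (sorted_eq_stdList (sorted_eva_oda L hsor).2 hod).symm
  have heu : ∀ q, entryq q u = L.getD (2 * q) 0 := fun q => by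
    rw [entryq, hstdu]; exact (getD_eva_oda L q).1
  have hevv : ∀ q, entryq q v = L.getD (2 * q + 1) 0 := fun q => by
    rw [entryq, hstdv]; exact (getD_eva_oda L q).2
  constructor
  · intro q
    by_cases hq : q < dd
    · rw [heu, hevv]
      exact sorted_getD_mono hsor (by omega) (by omega)
    · rw [entryq_zero (by omega), entryq_zero (by omega)]
  · intro p q hpq hq
    rw [hevv, heu]
    exact sorted_getD_mono hsor (by omega) (by omega)

lemma ord_le {u v : Multiset ℕ} (h : ordPair u v = (u, v)) :
    ∀ x ∈ v, ∀ y ∈ u, x ≤ y := by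
  have hu : (((stdList (u + v)).drop (Multiset.card v) : List ℕ) : Multiset ℕ) = u := by
    have h1 := congrArg Prod.fst h; simpa [ordPair] using h1
  have hv : (((stdList (u + v)).take (Multiset.card v) : List ℕ) : Multiset ℕ) = v := by
    have h1 := congrArg Prod.snd h; simpa [ordPair] using h1
  intro x hx y hy
  have hsor : (stdList (u + v)).Pairwise (· ≤ ·) := stdList_sorted _
  rw [← List.take_append_drop (Multiset.card v) (stdList (u + v))] at hsor
  have h2 := (List.pairwise_append.mp hsor).2.2
  refine h2 x ?_ y ?_
  · rw [← hv] at hx; exact Multiset.mem_coe.mp hx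
  · rw [← hu] at hy; exact Multiset.mem_coe.mp hy

/-! ### block decompositions -/

lemma mem_listSum {y : ℕ} : ∀ {B : List (Multiset ℕ)}, y ∈ B.sum → ∃ C ∈ B, y ∈ C := by
  intro B
  induction B with
  | nil => simp
  | cons C B ih =>
    intro hy
    rw [List.sum_cons] at hy
    rcases Multiset.mem_add.mp hy with h | h
    · exact ⟨C, List.mem_cons_self, h⟩
    · obtain ⟨D, hD, hyD⟩ := ih h
      exact ⟨D, List.mem_cons_of_mem C hD, hyD⟩

lemma flatten_sorted_blocks : ∀ (B : List (Multiset ℕ)),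
    B.Pairwise (fun A C => ∀ x ∈ A, ∀ y ∈ C, x ≤ y) →
    (B.map stdList).flatten = stdList B.sum := by
  intro B
  induction B with
  | nil =>
    intro _
    simp [stdList, Multiset.sort_zero]
  | cons A B ih =>
    intro hp
    rw [List.pairwise_cons] at hp
    rw [List.map_cons, List.flatten_cons, ih hp.2, List.sum_cons]
    apply sorted_eq_stdList
    · show List.Pairwise _ _
      rw [List.pairwise_append]
      refine ⟨stdList_sorted A, stdList_sorted _, fun x hx y hy => ?_⟩
      have hxA : x ∈ A := by rw [← stdList_coe A]; exact Multiset.mem_coe.mpr hx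
      have hyB : y ∈ B.sum := by rw [← stdList_coe B.sum]; exact Multiset.mem_coe.mpr hy
      obtain ⟨C, hC, hyC⟩ := mem_listSum hyB
      exact hp.1 C hC x hxA y hyC
    · rw [show ((stdList A ++ stdList B.sum : List ℕ) : Multiset ℕ)
          = (↑(stdList A) : Multiset ℕ) + ↑(stdList B.sum) from rfl, stdList_coe, stdList_coe]

lemma flatten_inj : ∀ (L L' : List (List ℕ)), L.map List.length = L'.map List.length →
    L.flatten = L'.flatten → L = L' := by
  intro L
  induction L with
  | nil =>
    intro L' h _
    simp only [List.map_nil] at h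
    rw [eq_comm, List.map_eq_nil_iff] at h
    rw [h]
  | cons l L ih =>
    intro L' hlen hflat
    cases L' with
    | nil => simp at hlen
    | cons l' L'' =>
      simp only [List.map_cons, List.cons.injEq] at hlen
      rw [List.flatten_cons, List.flatten_cons] at hflat
      obtain ⟨h1, h2⟩ := List.append_inj hflat hlen.1
      rw [h1, ih L'' hlen.2 h2]

lemma blocks_unique {B B' : List (Multiset ℕ)}
    (hcard : B.map Multiset.card = B'.map Multiset.card) (hsum : B.sum = B'.sum)
    (hp : B.Pairwise (fun A C => ∀ x ∈ A, ∀ y ∈ C, x ≤ y))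
    (hp' : B'.Pairwise (fun A C => ∀ x ∈ A, ∀ y ∈ C, x ≤ y)) : B = B' := by
  have h1 := flatten_sorted_blocks B hp
  have h2 := flatten_sorted_blocks B' hp'
  rw [hsum] at h1
  have hmap : B.map stdList = B'.map stdList := by
    apply flatten_inj _ _ ?_ (h1.trans h2.symm)
    rw [List.map_map, List.map_map]
    calc B.map (List.length ∘ stdList)
        = B.map Multiset.card := List.map_congr_left (fun A _ => stdList_length A)
      _ = B'.map Multiset.card := hcard
      _ = B'.map (List.length ∘ stdList) :=
          (List.map_congr_left (fun A _ => stdList_length A)).symm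
  have key : ∀ (C : List (Multiset ℕ)),
      (C.map stdList).map (fun l : List ℕ => (l : Multiset ℕ)) = C := by
    intro C
    rw [List.map_map]
    calc C.map ((fun l : List ℕ => (l : Multiset ℕ)) ∘ stdList)
        = C.map id := List.map_congr_left (fun A _ => stdList_coe A)
      _ = C := List.map_id C
  rw [← key B, ← key B', hmap]

/-! ### multiset helpers -/

lemma mem_msum {α : Type*} {y : ℕ} {f : α → Multiset ℕ} :
    ∀ {s : Multiset α}, y ∈ (s.map f).sum → ∃ T ∈ s, y ∈ f T := by
  intro s
  induction s using Multiset.induction with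
  | empty => simp
  | cons a s ih =>
    intro hy
    rw [Multiset.map_cons, Multiset.sum_cons] at hy
    rcases Multiset.mem_add.mp hy with h | h
    · exact ⟨a, Multiset.mem_cons_self a s, h⟩
    · obtain ⟨T, hT, hyT⟩ := ih h
      exact ⟨T, Multiset.mem_cons_of_mem hT, hyT⟩

lemma card_msum : ∀ (S : Multiset (Multiset ℕ)),
    Multiset.card S.sum = (S.map Multiset.card).sum := by
  intro S
  induction S using Multiset.induction with
  | empty => simp
  | cons a S ih => simp [ih]

lemma list_sum_map_add {α : Type*} (l : List α) (f g : α → Multiset ℕ) :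
    (l.map fun x => f x + g x).sum = (l.map f).sum + (l.map g).sum := by
  induction l with
  | nil => simp
  | cons a l ih =>
    simp only [List.map_cons, List.sum_cons, ih]
    exact add_add_add_comm _ _ _ _

lemma coe_map_singletons {α : Type*} : ∀ (r : List α) (f : α → ℕ),
    ((r.map f : List ℕ) : Multiset ℕ) = (r.map fun a => ({f a} : Multiset ℕ)).sum := by
  intro r f
  induction r with
  | nil => rfl
  | cons a r ih =>
    simp only [List.map_cons, List.sum_cons, ← Multiset.cons_coe, ih,
      ← Multiset.singleton_add]

lemma list_eq_range_getD (l : List ℕ) :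
    (List.range l.length).map (fun q => l.getD q 0) = l := by
  apply List.ext_getElem (by simp)
  intro i h1 h2
  rw [List.getElem_map, List.getElem_range, List.getD_eq_getElem _ _ h2]

lemma singletons_sum {u : Multiset ℕ} {dd : ℕ} (hd : Multiset.card u = dd) :
    ((List.range dd).map fun q => ({entryq q u} : Multiset ℕ)).sum = u := by
  have h := list_eq_range_getD (stdList u)
  rw [stdList_length, hd] at h
  rw [← coe_map_singletons]
  rw [show (List.range dd).map (fun q => entryq q u)
      = (List.range dd).map (fun q => (stdList u).getD q 0) from rfl, h, stdList_coe]

lemma colsum {dd : ℕ} : ∀ (F : Multiset (Multiset ℕ)), (∀ u ∈ F, Multiset.card u = dd) →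
    ((List.range dd).map fun q => F.map (entryq q)).sum = F.sum := by
  intro F
  induction F using Multiset.induction with
  | empty =>
    intro _
    simp only [Multiset.map_zero, Multiset.sum_zero]
    rw [List.map_const', List.sum_replicate, smul_zero]
  | cons a F ih =>
    intro hd
    have h1 : ∀ q, (a ::ₘ F).map (entryq q) = {entryq q a} + F.map (entryq q) := by
      intro q
      rw [Multiset.map_cons, Multiset.singleton_add]
    calc ((List.range dd).map fun q => (a ::ₘ F).map (entryq q)).sum
        = ((List.range dd).map fun q => {entryq q a} + F.map (entryq q)).sum := by
          rw [List.map_congr_left (fun q _ => h1 q)]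
      _ = ((List.range dd).map fun q => ({entryq q a} : Multiset ℕ)).sum
            + ((List.range dd).map fun q => F.map (entryq q)).sum :=
          list_sum_map_add _ _ _
      _ = a + F.sum := by
          rw [singletons_sum (hd a (Multiset.mem_cons_self a F)),
            ih (fun u hu => hd u (Multiset.mem_cons_of_mem hu))]
      _ = (a ::ₘ F).sum := (Multiset.sum_cons a F).symm

lemma map_erase_mem {α β : Type*} [DecidableEq α] [DecidableEq β] (f : α → β) {a : α}
    {s : Multiset α} (h : a ∈ s) : (s.erase a).map f = (s.map f).erase (f a) := by
  conv_rhs => rw [← Multiset.cons_erase h, Multiset.map_cons, Multiset.erase_cons_head]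

lemma map_injOn_eq {α β : Type*} [DecidableEq α] [DecidableEq β] {f : α → β} :
    ∀ {s t : Multiset α}, (∀ a ∈ s, ∀ b ∈ t, f a = f b → a = b) →
    s.map f = t.map f → s = t := by
  intro s
  induction s using Multiset.induction with
  | empty =>
    intro t _ h
    rw [Multiset.map_zero, eq_comm, Multiset.map_eq_zero] at h
    rw [h]
  | cons a s ih =>
    intro t hinj h
    have hfa : f a ∈ t.map f := by
      rw [← h, Multiset.map_cons]; exact Multiset.mem_cons_self _ _
    obtain ⟨b, hb, hfb⟩ := Multiset.mem_map.mp hfa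
    have hab : a = b := hinj a (Multiset.mem_cons_self a s) b hb hfb.symm
    subst hab
    have ht : t = a ::ₘ t.erase a := (Multiset.cons_erase hb).symm
    rw [ht, Multiset.map_cons, Multiset.map_cons, Multiset.cons_inj_right] at h
    rw [ht, ih (fun x hx y hy => hinj x (Multiset.mem_cons_of_mem hx) y
      (ht ▸ Multiset.mem_cons_of_mem hy)) h]

/-! ### within-level uniqueness -/

lemma exists_max : ∀ (F : Multiset (Multiset ℕ)), F ≠ 0 →
    (∀ u ∈ F, ∀ v ∈ F, (∀ q, entryq q u ≤ entryq q v) ∨ (∀ q, entryq q v ≤ entryq q u)) →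
    ∃ v ∈ F, ∀ u ∈ F, ∀ q, entryq q u ≤ entryq q v := by
  intro F
  induction F using Multiset.induction with
  | empty => intro h _; exact absurd rfl h
  | cons a F ih =>
    intro _ htot
    by_cases hF : F = 0
    · subst hF
      refine ⟨a, Multiset.mem_cons_self a 0, fun u hu q => ?_⟩
      rw [Multiset.mem_cons] at hu
      rcases hu with h | h
      · rw [h]
      · exact absurd h (Multiset.notMem_zero u)
    · obtain ⟨v, hv, hmax⟩ := ih hF (fun u hu w hw =>
        htot u (Multiset.mem_cons_of_mem hu) w (Multiset.mem_cons_of_mem hw))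
      rcases htot a (Multiset.mem_cons_self a F) v (Multiset.mem_cons_of_mem hv) with h | h
      · refine ⟨v, Multiset.mem_cons_of_mem hv, fun u hu => ?_⟩
        rw [Multiset.mem_cons] at hu
        rcases hu with h' | h'
        · rw [h']; exact h
        · exact hmax u h'
      · refine ⟨a, Multiset.mem_cons_self a F, fun u hu q => ?_⟩
        rw [Multiset.mem_cons] at hu
        rcases hu with h' | h'
        · rw [h']
        · exact le_trans (hmax u h' q) (h q)

lemma level_unique {dd : ℕ} : ∀ (c : ℕ) (F F' : Multiset (Multiset ℕ)),
    Multiset.card F = c → Multiset.card F' = c →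
    (∀ u ∈ F, Multiset.card u = dd) → (∀ u ∈ F', Multiset.card u = dd) →
    (∀ u ∈ F, ∀ v ∈ F, (∀ q, entryq q u ≤ entryq q v) ∨ (∀ q, entryq q v ≤ entryq q u)) →
    (∀ u ∈ F', ∀ v ∈ F', (∀ q, entryq q u ≤ entryq q v) ∨ (∀ q, entryq q v ≤ entryq q u)) →
    (∀ q, F.map (entryq q) = F'.map (entryq q)) → F = F' := by
  intro c
  induction c with
  | zero =>
    intro F F' hc hc' _ _ _ _ _
    rw [Multiset.card_eq_zero] at hc hc'
    rw [hc, hc']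
  | succ c ih =>
    intro F F' hc hc' hd hd' htot htot' hcols
    have hF0 : F ≠ 0 := by
      intro h; rw [h] at hc; simp at hc
    have hF0' : F' ≠ 0 := by
      intro h; rw [h] at hc'; simp at hc'
    obtain ⟨v, hv, hmax⟩ := exists_max F hF0 htot
    obtain ⟨v', hv', hmax'⟩ := exists_max F' hF0' htot'
    have hviv' : ∀ q, entryq q v = entryq q v' := by
      intro q
      have h1 : entryq q v ∈ F'.map (entryq q) := by
        rw [← hcols q]; exact Multiset.mem_map_of_mem _ hv
      obtain ⟨u', hu', he'⟩ := Multiset.mem_map.mp h1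
      have h2 : entryq q v' ∈ F.map (entryq q) := by
        rw [hcols q]; exact Multiset.mem_map_of_mem _ hv'
      obtain ⟨u, hu, he⟩ := Multiset.mem_map.mp h2
      exact le_antisymm (he' ▸ hmax' u' hu' q) (he ▸ hmax u hu q)
    have hvv' : v = v' := by
      refine entryq_ext ?_ hviv'
      rw [hd v hv, hd' v' hv']
    subst hvv'
    have herase : F.erase v = F'.erase v := by
      refine ih (F.erase v) (F'.erase v) ?_ ?_ ?_ ?_ ?_ ?_ ?_
      · rw [Multiset.card_erase_of_mem hv, hc]; rfl
      · rw [Multiset.card_erase_of_mem hv', hc']; rfl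
      · exact fun u hu => hd u (Multiset.mem_of_mem_erase hu)
      · exact fun u hu => hd' u (Multiset.mem_of_mem_erase hu)
      · exact fun u hu w hw => htot u (Multiset.mem_of_mem_erase hu) w
          (Multiset.mem_of_mem_erase hw)
      · exact fun u hu w hw => htot' u (Multiset.mem_of_mem_erase hu) w
          (Multiset.mem_of_mem_erase hw)
      · intro q
        rw [map_erase_mem _ hv, map_erase_mem _ hv', hcols q]
    calc F = v ::ₘ F.erase v := (Multiset.cons_erase hv).symm
      _ = v ::ₘ F'.erase v := by rw [herase]
      _ = F' := Multiset.cons_erase hv'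

/-! ### Psi as a monomial, and extraction -/

section PsiMon

variable {ss : ℕ} {ni : Fin (ss + 1) → ℕ}

def varsT (U : (i : Fin (ss + 1)) → Fin (ni i) → Multiset ℕ) (T : TVar ss ni) :
    Multiset (ℕ ⊕ Fin (ss + 1)) :=
  (U T.1 T.2).map Sum.inl + (if T.1 = 0 then 0 else {Sum.inr T.1})

def Vm (U : (i : Fin (ss + 1)) → Fin (ni i) → Multiset ℕ) (m : Multiset (TVar ss ni)) :
    Multiset (ℕ ⊕ Fin (ss + 1)) :=
  (m.map (varsT U)).sum

def Xall (U : (i : Fin (ss + 1)) → Fin (ni i) → Multiset ℕ) (m : Multiset (TVar ss ni)) :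
    Multiset ℕ :=
  (m.map fun T => U T.1 T.2).sum

def Ab (U : (i : Fin (ss + 1)) → Fin (ni i) → Multiset ℕ) (k : ℕ) (m : Multiset (TVar ss ni)) :
    Multiset ℕ :=
  ((m.filter fun T => k < (T.1 : ℕ)).map fun T => U T.1 T.2).sum

def Blk (U : (i : Fin (ss + 1)) → Fin (ni i) → Multiset ℕ) (k : ℕ) (m : Multiset (TVar ss ni)) :
    Multiset ℕ :=
  ((m.filter fun T => (T.1 : ℕ) = k).map fun T => U T.1 T.2).sum

def cnt (i : Fin (ss + 1)) (m : Multiset (TVar ss ni)) : ℕ :=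
  Multiset.card (m.filter fun T => T.1 = i)

def Fi (U : (i : Fin (ss + 1)) → Fin (ni i) → Multiset ℕ) (i : Fin (ss + 1))
    (m : Multiset (TVar ss ni)) : Multiset (Multiset ℕ) :=
  (m.filter fun T => T.1 = i).map fun T => U T.1 T.2

lemma X_prod (K : Type*) [Field K] {σ : Type*} [DecidableEq σ] (ms : Multiset σ) :
    (ms.map fun v => (MvPolynomial.X v : MvPolynomial σ K)).prod
      = MvPolynomial.monomial (Multiset.toFinsupp ms) 1 := by
  induction ms using Multiset.induction with
  | empty => simp
  | cons a t ih =>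
    rw [Multiset.map_cons, Multiset.prod_cons, ih,
      show (a ::ₘ t) = {a} + t from (Multiset.singleton_add a t).symm,
      Multiset.toFinsupp_add, Multiset.toFinsupp_singleton,
      show (MvPolynomial.X a : MvPolynomial σ K)
        = MvPolynomial.monomial (Finsupp.single a 1) 1 from rfl,
      MvPolynomial.monomial_mul, one_mul]

lemma PsiT_eq (K : Type*) [Field K] (U : (i : Fin (ss + 1)) → Fin (ni i) → Multiset ℕ)
    (T : TVar ss ni) :
    PsiT K U T = ((varsT U T).map fun v =>
      (MvPolynomial.X v : MvPolynomial (ℕ ⊕ Fin (ss + 1)) K)).prod := by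
  rw [PsiT, varsT, Multiset.map_add, Multiset.prod_add]
  congr 1
  · rw [Multiset.map_map]; rfl
  · by_cases h : T.1 = 0 <;> simp [h]

lemma Psi_monomial (K : Type*) [Field K] (U : (i : Fin (ss + 1)) → Fin (ni i) → Multiset ℕ)
    (m : Multiset (TVar ss ni)) :
    Psi K U m = MvPolynomial.monomial (Multiset.toFinsupp (Vm U m)) 1 := by
  induction m using Multiset.induction with
  | empty => simp [Psi, Vm]
  | cons T m ih =>
    rw [Psi, Multiset.map_cons, Multiset.prod_cons,
      show (m.map (PsiT K U)).prod = Psi K U m from rfl, ih, PsiT_eq, X_prod,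
      MvPolynomial.monomial_mul, one_mul]
    conv_rhs => rw [Vm, Multiset.map_cons, Multiset.sum_cons, Multiset.toFinsupp_add]
    rfl

lemma filterMap_add' {α β : Type*} (f : α → Option β) (s t : Multiset α) :
    Multiset.filterMap f (s + t) = Multiset.filterMap f s + Multiset.filterMap f t := by
  induction s using Multiset.induction with
  | empty => rw [Multiset.filterMap_zero, zero_add, zero_add]
  | cons a s ih =>
    rw [Multiset.cons_add]
    cases h : f a with
    | none =>
      rw [Multiset.filterMap_cons_none _ _ h, Multiset.filterMap_cons_none _ _ h, ih]
    | some b =>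
      rw [Multiset.filterMap_cons_some _ _ _ h, Multiset.filterMap_cons_some _ _ _ h,
        ih, Multiset.cons_add]

lemma Vm_filterMap (U : (i : Fin (ss + 1)) → Fin (ni i) → Multiset ℕ)
    (m : Multiset (TVar ss ni)) :
    Multiset.filterMap (Sum.elim some fun _ => none) (Vm U m) = Xall U m := by
  induction m using Multiset.induction with
  | empty => simp [Vm, Xall]
  | cons T m ih =>
    rw [Vm, Multiset.map_cons, Multiset.sum_cons,
      show (m.map (varsT U)).sum = Vm U m from rfl, filterMap_add', ih]
    conv_rhs => rw [Xall, Multiset.map_cons, Multiset.sum_cons]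
    congr 1
    rw [varsT, filterMap_add']
    have h1 : Multiset.filterMap (Sum.elim some fun _ => none)
        ((U T.1 T.2).map (Sum.inl : ℕ → ℕ ⊕ Fin (ss + 1))) = U T.1 T.2 := by
      rw [Multiset.filterMap_map]
      rw [show ((Sum.elim some fun _ => none) ∘ (Sum.inl : ℕ → ℕ ⊕ Fin (ss + 1)))
        = some ∘ id from rfl, Multiset.filterMap_eq_map, Multiset.map_id]
    have h2 : Multiset.filterMap (Sum.elim some fun _ => none)
        (if T.1 = 0 then (0 : Multiset (ℕ ⊕ Fin (ss + 1))) else {Sum.inr T.1}) = 0 := by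
      by_cases h : T.1 = 0
      · rw [if_pos h, Multiset.filterMap_zero]
      · rw [if_neg h, show ({Sum.inr T.1} : Multiset (ℕ ⊕ Fin (ss + 1)))
          = Sum.inr T.1 ::ₘ 0 from rfl, Multiset.filterMap_cons_none _ _ rfl,
          Multiset.filterMap_zero]
    rw [h1, h2, add_zero]

lemma Vm_count (U : (i : Fin (ss + 1)) → Fin (ni i) → Multiset ℕ) (i : Fin (ss + 1))
    (hi : i ≠ 0) (m : Multiset (TVar ss ni)) :
    Multiset.count (Sum.inr i : ℕ ⊕ Fin (ss + 1)) (Vm U m) = cnt i m := by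
  induction m using Multiset.induction with
  | empty => simp [Vm, cnt]
  | cons T m ih =>
    rw [Vm, Multiset.map_cons, Multiset.sum_cons,
      show (m.map (varsT U)).sum = Vm U m from rfl, Multiset.count_add, ih]
    conv_rhs => rw [cnt, Multiset.filter_cons, Multiset.card_add]
    congr 1
    rw [varsT, Multiset.count_add]
    have h1 : Multiset.count (Sum.inr i : ℕ ⊕ Fin (ss + 1))
        ((U T.1 T.2).map Sum.inl) = 0 := by
      rw [Multiset.count_eq_zero]
      intro h
      obtain ⟨x, -, hx⟩ := Multiset.mem_map.mp h
      exact Sum.inl_ne_inr hx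
    rw [h1, zero_add]
    by_cases h : T.1 = 0
    · rw [if_pos h, if_neg (fun hh : T.1 = i => hi (by rw [← hh, h]))]
      simp
    · rw [if_neg h, Multiset.count_singleton]
      by_cases h2 : T.1 = i
      · rw [if_pos (by rw [h2]), if_pos h2, Multiset.card_singleton]
      · rw [if_neg (fun hh : (Sum.inr i : ℕ ⊕ Fin (ss + 1)) = Sum.inr T.1 =>
          h2 (Sum.inr_injective hh).symm), if_neg h2, Multiset.card_zero]

lemma range_map_eq {β : Type*} {n q : ℕ} {f g : ℕ → β}
    (h : (List.range n).map f = (List.range n).map g) (hq : q < n) : f q = g q := by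
  have h1 := List.getElem_of_eq h (i := q) (by simpa using hq)
  simpa using h1

end PsiMon

end MR

/-- in the multi-Rees setup with `M` closed under comparability, `Ψ`
is injective on completely reduced monomials; consequently the images under `Ψ` of
the completely reduced monomials are linearly independent over `K`. -/
theorem Psi_injOn_completely_reduced {s n : ℕ} {ni : Fin (s + 1) → ℕ}
    (K : Type*) [Field K]
    (U : (i : Fin (s + 1)) → Fin (ni i) → Multiset ℕ) (d : Fin (s + 1) → ℕ)
    (hd0 : d 0 = 1) (hdmono : Monotone d)
    (hcard : ∀ i j, Multiset.card (U i j) = d i)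
    (hn0 : ni 0 = n) (hvar0 : ∀ j : Fin (ni 0), U 0 j = {(j : ℕ)})
    (hvars : ∀ i j, ∀ a ∈ U i j, a < n)
    (hrev : ∀ i (j j' : Fin (ni i)), j < j' → revGtM (U i j) (U i j'))
    (hOrd : ∀ (i i' : Fin (s + 1)) (j : Fin (ni i)) (j' : Fin (ni i')), i < i' →
      ∃ l l', ordPair (U i j) (U i' j') = (U i l, U i' l'))
    (hSort : ∀ (i : Fin (s + 1)) (j j' : Fin (ni i)),
      ∃ l l', sortPair (U i j) (U i j') = (U i l, U i l')) :
    Set.InjOn (Psi K U) { m | CompletelyReduced U m } ∧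
    LinearIndependent K
      (fun m : { m : Multiset (TVar s ni) // CompletelyReduced U m } => Psi K U m.val) := by
  classical
  have hdpos : ∀ i : Fin (s + 1), 0 < d i := by
    intro i
    have h1 := hdmono (Fin.zero_le i)
    omega
  have hUinj : ∀ (i : Fin (s + 1)) (j j' : Fin (ni i)), U i j = U i j' → j = j' := by
    intro i j j' h
    by_contra hne
    rcases lt_or_gt_of_ne hne with hlt | hlt
    · obtain ⟨k, hk, -⟩ := hrev i j j' hlt
      rw [h] at hk
      exact lt_irrefl _ hk
    · obtain ⟨k, hk, -⟩ := hrev i j' j hlt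
      rw [h] at hk
      exact lt_irrefl _ hk
  have hcardBlk : ∀ (i : Fin (s + 1)) (M : Multiset (TVar s ni)),
      Multiset.card (MR.Blk U (i : ℕ) M) = MR.cnt i M * d i := by
    intro i M
    rw [MR.Blk, MR.card_msum, Multiset.map_map]
    rw [show M.filter (fun T => ((T.1 : ℕ) = (i : ℕ))) = M.filter (fun T => T.1 = i) from
      Multiset.filter_congr (fun T _ => Fin.val_eq_val T.1 i)]
    have hmapc : (M.filter fun T => T.1 = i).map (Multiset.card ∘ fun T => U T.1 T.2)
        = (M.filter fun T => T.1 = i).map (fun _ => d i) := by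
      apply Multiset.map_congr rfl
      intro T hT
      have hTi : T.1 = i := (Multiset.mem_filter.mp hT).2
      show Multiset.card (U T.1 T.2) = d i
      rw [hcard, hTi]
    rw [hmapc, Multiset.map_const', Multiset.sum_replicate, smul_eq_mul, MR.cnt]
  have hcross : ∀ (M : Multiset (TVar s ni)), CompletelyReduced U M → ∀ k : ℕ,
      ∀ x ∈ MR.Ab U k M,
      ∀ y ∈ ((M.filter fun T => ¬ k < (T.1 : ℕ)).map fun T => U T.1 T.2).sum, x ≤ y := by
    intro M hM k x hx y hy
    obtain ⟨Tb, hTb, hxU⟩ := MR.mem_msum hx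
    obtain ⟨Ta, hTa, hyU⟩ := MR.mem_msum hy
    rw [Multiset.mem_filter] at hTb hTa
    have hlt : Ta.1 < Tb.1 := by
      rw [Fin.lt_def]
      have h1 := hTa.2
      have h2 := hTb.2
      omega
    have hne : Ta ≠ Tb := fun h => by rw [h] at hlt; exact lt_irrefl _ hlt
    rcases hM Ta hTa.1 Tb hTb.1 hne with hp | hp
    · rcases hp with ⟨-, hord⟩ | ⟨heq, -⟩
      · exact MR.ord_le hord x hxU y hyU
      · exact absurd heq (ne_of_lt hlt)
    · rcases hp with ⟨hlt', -⟩ | ⟨heq, -⟩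
      · exact absurd hlt' (not_lt.mpr (le_of_lt hlt))
      · exact absurd heq.symm (ne_of_lt hlt)
  have hsplit0 : ∀ (k : ℕ) (M : Multiset (TVar s ni)),
      MR.Xall U M = MR.Ab U k M
        + ((M.filter fun T => ¬ k < (T.1 : ℕ)).map fun T => U T.1 T.2).sum := by
    intro k M
    rw [MR.Xall, MR.Ab, ← Multiset.sum_add, ← Multiset.map_add, Multiset.filter_add_not]
  have hstep : ∀ (k : ℕ) (M : Multiset (TVar s ni)),
      MR.Ab U k M = MR.Blk U (k + 1) M + MR.Ab U (k + 1) M := by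
    intro k M
    have hf : M.filter (fun T => k < (T.1 : ℕ))
        = M.filter (fun T => (T.1 : ℕ) = k + 1) + M.filter (fun T => k + 1 < (T.1 : ℕ)) := by
      ext a
      rw [Multiset.count_add, Multiset.count_filter, Multiset.count_filter,
        Multiset.count_filter]
      split_ifs <;> omega
    rw [MR.Ab, MR.Blk, MR.Ab, hf, Multiset.map_add, Multiset.sum_add]
  have key : Set.InjOn (Psi K U) { m | CompletelyReduced U m } := by
    intro m hm m' hm' hpsi
    simp only [Set.mem_setOf_eq] at hm hm'
    rw [MR.Psi_monomial, MR.Psi_monomial] at hpsi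
    rcases (MvPolynomial.monomial_eq_monomial_iff _ _ _ _).mp hpsi with ⟨hV, -⟩ | ⟨h1, -⟩
    swap
    · exact absurd h1 one_ne_zero
    have hVm : MR.Vm U m = MR.Vm U m' := Multiset.toFinsupp.injective hV
    have hX : MR.Xall U m = MR.Xall U m' := by
      rw [← MR.Vm_filterMap U m, ← MR.Vm_filterMap U m', hVm]
    have hcnt : ∀ i : Fin (s + 1), i ≠ 0 → MR.cnt i m = MR.cnt i m' := by
      intro i hi
      rw [← MR.Vm_count U i hi m, ← MR.Vm_count U i hi m', hVm]
    have habz : ∀ k : ℕ, s ≤ k → ∀ M : Multiset (TVar s ni), MR.Ab U k M = 0 := by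
      intro k hk M
      have hfe : M.filter (fun T => k < (T.1 : ℕ)) = 0 := by
        rw [Multiset.filter_eq_nil]
        intro T _
        have h2 := T.1.isLt
        omega
      rw [MR.Ab, hfe]
      rfl
    have hcardAb : ∀ k : ℕ,
        Multiset.card (MR.Ab U k m) = Multiset.card (MR.Ab U k m') := by
      have main : ∀ (j k : ℕ), s ≤ k + j →
          Multiset.card (MR.Ab U k m) = Multiset.card (MR.Ab U k m') := by
        intro j
        induction j with
        | zero =>
          intro k hk
          rw [habz k (by omega) m, habz k (by omega) m']
        | succ j ihj =>
          intro k hk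
          rcases le_or_gt s k with hks | hks
          · rw [habz k hks m, habz k hks m']
          · rw [hstep k m, hstep k m', Multiset.card_add, Multiset.card_add,
              ihj (k + 1) (by omega)]
            have hi : (k + 1) < s + 1 := by omega
            have h1 : MR.Blk U (k + 1) m
                = MR.Blk U ((⟨k + 1, hi⟩ : Fin (s + 1)) : ℕ) m := rfl
            have h2 : MR.Blk U (k + 1) m'
                = MR.Blk U ((⟨k + 1, hi⟩ : Fin (s + 1)) : ℕ) m' := rfl
            rw [h1, h2, hcardBlk, hcardBlk,
              hcnt ⟨k + 1, hi⟩ (by simp [Fin.ext_iff])]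
      intro k
      exact main s k (by omega)
    have hAb : ∀ k : ℕ, MR.Ab U k m = MR.Ab U k m' := by
      intro k
      have hsp : ∀ (M : Multiset (TVar s ni)), CompletelyReduced U M →
          stdList (MR.Xall U M) = stdList (MR.Ab U k M)
            ++ stdList (((M.filter fun T => ¬ k < (T.1 : ℕ)).map
                fun T => U T.1 T.2).sum) := by
        intro M hM
        symm
        apply MR.sorted_eq_stdList
        · show List.Pairwise _ _
          rw [List.pairwise_append]
          refine ⟨MR.stdList_sorted _, MR.stdList_sorted _, fun x hx y hy => ?_⟩
          refine hcross M hM k x ?_ y ?_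
          · rw [← MR.stdList_coe (MR.Ab U k M)]
            exact Multiset.mem_coe.mpr hx
          · rw [← MR.stdList_coe (((M.filter fun T => ¬ k < (T.1 : ℕ)).map
              fun T => U T.1 T.2).sum)]
            exact Multiset.mem_coe.mpr hy
        · rw [show ((stdList (MR.Ab U k M)
              ++ stdList (((M.filter fun T => ¬ k < (T.1 : ℕ)).map
                fun T => U T.1 T.2).sum) : List ℕ) : Multiset ℕ)
            = (↑(stdList (MR.Ab U k M)) : Multiset ℕ)
              + ↑(stdList (((M.filter fun T => ¬ k < (T.1 : ℕ)).map
                fun T => U T.1 T.2).sum)) from rfl,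
            MR.stdList_coe, MR.stdList_coe, ← hsplit0 k M]
      have h1 := hsp m hm
      have h2 := hsp m' hm'
      rw [hX] at h1
      have h3 := h1.symm.trans h2
      obtain ⟨e1, -⟩ := List.append_inj h3
        (by rw [MR.stdList_length, MR.stdList_length, hcardAb k])
      rw [← MR.stdList_coe (MR.Ab U k m), ← MR.stdList_coe (MR.Ab U k m'), e1]
    have hBlk : ∀ k : ℕ, MR.Blk U k m = MR.Blk U k m' := by
      intro k
      cases k with
      | zero =>
        have h0 : ∀ M : Multiset (TVar s ni),
            MR.Xall U M = MR.Ab U 0 M + MR.Blk U 0 M := by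
          intro M
          have hf : M.filter (fun T => ¬ 0 < (T.1 : ℕ))
              = M.filter (fun T => (T.1 : ℕ) = 0) := by
            apply Multiset.filter_congr
            intro T _
            omega
          rw [hsplit0 0 M, MR.Blk, hf]
        have e := (h0 m).symm.trans (hX.trans (h0 m'))
        rw [hAb 0] at e
        exact add_left_cancel e
      | succ k =>
        have e := (hstep k m).symm.trans ((hAb k).trans (hstep k m'))
        rw [hAb (k + 1)] at e
        exact add_right_cancel e
    have hcnt' : ∀ i : Fin (s + 1), MR.cnt i m = MR.cnt i m' := by
      intro i
      have h1 := hcardBlk i m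
      have h2 := hcardBlk i m'
      rw [hBlk (i : ℕ)] at h1
      exact Nat.eq_of_mul_eq_mul_right (hdpos i) (h1.symm.trans h2)
    have hBlkFi : ∀ (i : Fin (s + 1)) (M : Multiset (TVar s ni)),
        MR.Blk U (i : ℕ) M = (MR.Fi U i M).sum := by
      intro i M
      rw [MR.Blk, MR.Fi,
        show M.filter (fun T => ((T.1 : ℕ) = (i : ℕ))) = M.filter (fun T => T.1 = i) from
          Multiset.filter_congr (fun T _ => Fin.val_eq_val T.1 i)]
    have hFicard : ∀ (i : Fin (s + 1)) (M : Multiset (TVar s ni)),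
        Multiset.card (MR.Fi U i M) = MR.cnt i M := by
      intro i M
      rw [MR.Fi, Multiset.card_map, MR.cnt]
    have hFid : ∀ (i : Fin (s + 1)) (M : Multiset (TVar s ni)),
        ∀ u ∈ MR.Fi U i M, Multiset.card u = d i := by
      intro i M u hu
      obtain ⟨T, hT, rfl⟩ := Multiset.mem_map.mp hu
      rw [hcard, (Multiset.mem_filter.mp hT).2]
    have hFisort : ∀ (i : Fin (s + 1)) (M : Multiset (TVar s ni)), CompletelyReduced U M →
        ∀ u ∈ MR.Fi U i M, ∀ v ∈ MR.Fi U i M,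
        u = v ∨ sortPair u v = (u, v) ∨ sortPair v u = (v, u) := by
      intro i M hM u hu v hv
      obtain ⟨T, hT, rfl⟩ := Multiset.mem_map.mp hu
      obtain ⟨T', hT', rfl⟩ := Multiset.mem_map.mp hv
      by_cases hTT : T = T'
      · left; rw [hTT]
      · have hTi : T.1 = i := (Multiset.mem_filter.mp hT).2
        have hT'i : T'.1 = i := (Multiset.mem_filter.mp hT').2
        rcases hM T (Multiset.mem_of_mem_filter hT) T' (Multiset.mem_of_mem_filter hT') hTT
          with hp | hp
        · rcases hp with ⟨hlt, -⟩ | ⟨-, hsp⟩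
          · exfalso; rw [hTi, hT'i] at hlt; exact lt_irrefl _ hlt
          · right; left; exact hsp
        · rcases hp with ⟨hlt, -⟩ | ⟨-, hsp⟩
          · exfalso; rw [hTi, hT'i] at hlt; exact lt_irrefl _ hlt
          · right; right; exact hsp
    have hFitot : ∀ (i : Fin (s + 1)) (M : Multiset (TVar s ni)), CompletelyReduced U M →
        ∀ u ∈ MR.Fi U i M, ∀ v ∈ MR.Fi U i M,
        (∀ q, MR.entryq q u ≤ MR.entryq q v) ∨ (∀ q, MR.entryq q v ≤ MR.entryq q u) := by
      intro i M hM u hu v hv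
      rcases hFisort i M hM u hu v hv with h | h | h
      · left; rw [h]; exact fun q => le_refl _
      · exact Or.inl (MR.sort_pair_props (hFid i M u hu) (hFid i M v hv) h).1
      · exact Or.inr (MR.sort_pair_props (hFid i M v hv) (hFid i M u hu) h).1
    have hFi : ∀ i : Fin (s + 1), MR.Fi U i m = MR.Fi U i m' := by
      intro i
      have hpw : ∀ (M : Multiset (TVar s ni)), CompletelyReduced U M →
          ((List.range (d i)).map fun q => (MR.Fi U i M).map (MR.entryq q)).Pairwise
            (fun A C => ∀ x ∈ A, ∀ y ∈ C, x ≤ y) := by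
        intro M hM
        rw [List.pairwise_iff_getElem]
        intro p q hp hq hpq
        rw [List.length_map, List.length_range] at hp hq
        rw [List.getElem_map, List.getElem_map, List.getElem_range, List.getElem_range]
        intro x hx y hy
        obtain ⟨u, hu, rfl⟩ := Multiset.mem_map.mp hx
        obtain ⟨v, hv, rfl⟩ := Multiset.mem_map.mp hy
        rcases hFisort i M hM u hu v hv with h | h | h
        · rw [h]
          exact MR.entryq_mono (le_of_lt hpq) (by rw [hFid i M v hv]; exact hq)
        · calc MR.entryq p u
              ≤ MR.entryq p v := (MR.sort_pair_props (hFid i M u hu) (hFid i M v hv) h).1 p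
            _ ≤ MR.entryq q v :=
              MR.entryq_mono (le_of_lt hpq) (by rw [hFid i M v hv]; exact hq)
        · exact (MR.sort_pair_props (hFid i M v hv) (hFid i M u hu) h).2 p q hpq hq
      have hBcols : ((List.range (d i)).map fun q => (MR.Fi U i m).map (MR.entryq q))
          = (List.range (d i)).map fun q => (MR.Fi U i m').map (MR.entryq q) := by
        apply MR.blocks_unique ?_ ?_ (hpw m hm) (hpw m' hm')
        · rw [List.map_map, List.map_map]
          calc (List.range (d i)).map
                (Multiset.card ∘ fun q => (MR.Fi U i m).map (MR.entryq q))
              = (List.range (d i)).map (fun _ => MR.cnt i m) :=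
                List.map_congr_left (fun q _ => by
                  show Multiset.card ((MR.Fi U i m).map (MR.entryq q)) = MR.cnt i m
                  rw [Multiset.card_map, hFicard i m])
            _ = (List.range (d i)).map (fun _ => MR.cnt i m') := by rw [hcnt' i]
            _ = (List.range (d i)).map
                (Multiset.card ∘ fun q => (MR.Fi U i m').map (MR.entryq q)) :=
                (List.map_congr_left (fun q _ => by
                  show Multiset.card ((MR.Fi U i m').map (MR.entryq q)) = MR.cnt i m'
                  rw [Multiset.card_map, hFicard i m'])).symm
        · rw [MR.colsum _ (hFid i m), MR.colsum _ (hFid i m'), ← hBlkFi, ← hBlkFi,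
            hBlk (i : ℕ)]
      have hcols : ∀ q,
          (MR.Fi U i m).map (MR.entryq q) = (MR.Fi U i m').map (MR.entryq q) := by
        intro q
        by_cases hq : q < d i
        · exact MR.range_map_eq hBcols hq
        · have hz : ∀ (M : Multiset (TVar s ni)),
              (MR.Fi U i M).map (MR.entryq q) = Multiset.replicate (MR.cnt i M) 0 := by
            intro M
            rw [show (MR.Fi U i M).map (MR.entryq q) = (MR.Fi U i M).map (fun _ => 0) from
              Multiset.map_congr rfl (fun u hu =>
                MR.entryq_zero (by rw [hFid i M u hu]; omega)),
              Multiset.map_const', hFicard i M]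
          rw [hz m, hz m', hcnt' i]
      exact MR.level_unique (MR.cnt i m) _ _ (hFicard i m)
        (by rw [hFicard i m', ← hcnt' i]) (hFid i m) (hFid i m')
        (hFitot i m hm) (hFitot i m' hm') hcols
    have hfil : ∀ i : Fin (s + 1),
        m.filter (fun T => T.1 = i) = m'.filter (fun T => T.1 = i) := by
      intro i
      apply MR.map_injOn_eq ?_ (hFi i)
      intro a ha b hb hU
      obtain ⟨ia, ja⟩ := a
      obtain ⟨ib, jb⟩ := b
      have hai : ia = i := (Multiset.mem_filter.mp ha).2
      have hbi : ib = i := (Multiset.mem_filter.mp hb).2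
      subst hai
      subst hbi
      rw [hUinj _ ja jb hU]
    apply Multiset.ext.mpr
    intro T
    have h1 := congrArg (Multiset.count T) (hfil T.1)
    rwa [Multiset.count_filter, Multiset.count_filter, if_pos rfl, if_pos rfl] at h1
  refine ⟨key, ?_⟩
  have hco : (fun m : { m : Multiset (TVar s ni) // CompletelyReduced U m } => Psi K U m.val)
      = (⇑(MvPolynomial.basisMonomials (ℕ ⊕ Fin (s + 1)) K))
        ∘ (fun m : { m : Multiset (TVar s ni) // CompletelyReduced U m } =>
            Multiset.toFinsupp (MR.Vm U m.val)) := by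
    funext x
    rw [Function.comp_apply, MvPolynomial.coe_basisMonomials, MR.Psi_monomial]
  rw [hco]
  apply (MvPolynomial.basisMonomials (ℕ ⊕ Fin (s + 1)) K).linearIndependent.comp
  intro x y hxy
  have h1 : Psi K U x.val = Psi K U y.val := by
    rw [MR.Psi_monomial, MR.Psi_monomial]
    exact congrArg (fun e => MvPolynomial.monomial e (1 : K)) hxy
  exact Subtype.ext (key x.2 y.2 h1)
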